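/- Let f(x) − T(s) ≥ (σ/p')·∥s∥^{p'} with σ > 0, and suppose |f(x+s) − T(s)| ≤ (L/(p+1))·∥s∥^{p+1}. Define ρ = (f(x) − f(x+s))/(f(x) − T(s)). If σ ≥ (L·p')/((p+1)·(1−η))·∥s∥^{p+1−p'} for some η ∈ (0,1), then ρ ≥ η. -/

import Mathlib

/-- Sufficient condition for a successful iteration: if the model decrease dominates
the regularization term, the Taylor error bound holds, and `σ` is large enough, then
the ratio of actual to predicted decrease satisfies `ρ ≥ η`. -/
theorem successful_iteration_condition (p p' : ℕ) (hp : 1 ≤ p) (hp' : p + 1 ≤ p')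
    (L σ η t fx Tval fxs : ℝ) (hσ : 0 < σ) (ht : 0 < t)
    (hη0 : 0 < η) (hη1 : η < 1)
    (hmodel : fx - Tval ≥ σ / (p' : ℝ) * t ^ p')
    (herr : |fxs - Tval| ≤ L / ((p : ℝ) + 1) * t ^ (p + 1))
    (hσbig : σ ≥ L * (p' : ℝ) / (((p : ℝ) + 1) * (1 - η)) * t ^ (((p : ℝ) + 1) - (p' : ℝ))) :
    (fx - fxs) / (fx - Tval) ≥ η := by
  have hp'pos : 0 < p' := by omega
  have hp'R : (0:ℝ) < (p' : ℝ) := by exact_mod_cast hp'pos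
  have htp' : (0:ℝ) < t ^ p' := pow_pos ht _
  have htp1 : (0:ℝ) < t ^ (p + 1) := pow_pos ht _
  have hD : 0 < fx - Tval := lt_of_lt_of_le (by positivity) hmodel
  have hrpow : t ^ (((p:ℝ) + 1) - (p':ℝ)) = t ^ (p + 1) / t ^ p' := by
    rw [Real.rpow_sub ht]
    congr 1
    · rw [show ((p:ℝ) + 1) = ((p + 1 : ℕ) : ℝ) by push_cast; ring, Real.rpow_natCast]
    · rw [Real.rpow_natCast]
  rw [hrpow] at hσbig
  have h1η : (0:ℝ) < 1 - η := by linarith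
  have hpR : (0:ℝ) < (p:ℝ) + 1 := by positivity
  -- clear denominators in hσbig
  have key : L * (p':ℝ) * t ^ (p + 1) ≤ σ * (((p:ℝ) + 1) * (1 - η)) * t ^ p' := by
    have := hσbig
    rw [ge_iff_le, div_mul_eq_mul_div, div_le_iff₀ (by positivity)] at this
    calc L * (p':ℝ) * t ^ (p + 1)
        = L * (p':ℝ) * (t ^ (p+1) / t ^ p') * t ^ p' := by field_simp
      _ ≤ σ * (((p:ℝ) + 1) * (1 - η)) * t ^ p' := by nlinarith [htp'.le]
  -- error bound in terms of model decrease
  have herr2 : |fxs - Tval| ≤ (1 - η) * (σ / (p':ℝ) * t ^ p') := by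
    have : L / ((p:ℝ) + 1) * t ^ (p + 1) ≤ (1 - η) * (σ / (p':ℝ) * t ^ p') := by
      rw [div_mul_eq_mul_div, div_le_iff₀ hpR]
      have h2 : (1 - η) * (σ / (p':ℝ) * t ^ p') * ((p:ℝ) + 1) * (p':ℝ)
          = σ * (((p:ℝ) + 1) * (1 - η)) * t ^ p' := by field_simp
      nlinarith [key]
    linarith
  have habs := abs_le.mp herr2
  have hbound : fx - fxs ≥ η * (fx - Tval) := by
    have h3 : (1 - η) * (σ / (p':ℝ) * t ^ p') ≤ (1 - η) * (fx - Tval) :=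
      mul_le_mul_of_nonneg_left hmodel h1η.le
    nlinarith [habs.2]
  rw [ge_iff_le, le_div_iff₀ hD]
  nlinarith [hbound]
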